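/- Let L > 0, C > 0. For each N ∈ ℕ let λ_N > 0, let 0 = t₀^N ≤ t₁^N < t₂^N < … < t_N^N ≤ t_{N+1}^N = L be a partition, and let y_N : [0,L] → ℝ³ be C¹ with absolutely continuous derivative and ∫₀^L |y_N''(t)|² dt ≤ C. Assume: |y_N'(t_i^N)| = λ_N for all i = 1,…,N; |y_N'(t)| = λ_N for all t ∈ [0,t₁^N] ∪ [t_N^N, L]; λ_N → 1; max_{0≤i≤N}(t_{i+1}^N − t_i^N) → 0; and y_N' converges pointwise on [0,L] to a function v : [0,L] → ℝ³. Then |v(t)| = 1 for every t ∈ [0,L]. -/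

import Mathlib

open MeasureTheory Set Filter Topology

lemma cs_aux {L a b : ℝ} (f : ℝ → EuclideanSpace ℝ (Fin 3))
    (hf : MemLp f 2 (volume.restrict (Ioo 0 L)))
    (hsub : Ioc a b ⊆ Ioo 0 L) (hab : a ≤ b) :
    ∫ σ in Ioc a b, ‖f σ‖ ≤ Real.sqrt ((b - a) * ∫ σ in Ioo 0 L, ‖f σ‖ ^ 2) := by
  have hmeas : (volume.restrict (Ioc a b)) ≤ volume.restrict (Ioo 0 L) :=
    Measure.restrict_mono hsub le_rfl
  have hf' : MemLp f 2 (volume.restrict (Ioc a b)) := hf.mono_measure hmeas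
  have hfn : MemLp (fun σ => ‖f σ‖) 2 (volume.restrict (Ioc a b)) := hf'.norm
  have h1 : MemLp (fun _ : ℝ => (1:ℝ)) 2 (volume.restrict (Ioc a b)) := memLp_const 1
  have hpq : Real.HolderConjugate 2 2 := Real.HolderConjugate.two_two
  have key := integral_mul_le_Lp_mul_Lq_of_nonneg hpq
    (f := fun σ => ‖f σ‖) (g := fun _ => (1:ℝ))
    (Eventually.of_forall fun x => norm_nonneg _)
    (Eventually.of_forall fun x => zero_le_one)
    (by simpa using hfn) (by simpa using h1)
  simp only [mul_one] at key
  have hone : ∫ _ in Ioc a b, (1:ℝ) ^ (2:ℝ) = b - a := by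
    simp [Real.volume_Ioc, ENNReal.toReal_ofReal (sub_nonneg.2 hab), hab]
  -- integrability of ‖f‖^2 on Ioo 0 L
  have hint : IntegrableOn (fun σ => ‖f σ‖ ^ 2) (Ioo 0 L) volume := by
    have := hf.integrable_norm_rpow two_ne_zero ENNReal.ofNat_ne_top
    simpa [ENNReal.toReal_ofNat, Real.rpow_two, IntegrableOn] using this
  have hsubint : ∫ σ in Ioc a b, ‖f σ‖ ^ 2 ≤ ∫ σ in Ioo 0 L, ‖f σ‖ ^ 2 := by
    apply setIntegral_mono_set hint
    · exact Eventually.of_forall fun x => sq_nonneg _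
    · exact Eventually.of_forall hsub
  have hrpow : ∫ σ in Ioc a b, ‖f σ‖ ^ (2:ℝ) = ∫ σ in Ioc a b, ‖f σ‖ ^ 2 := by
    simp [Real.rpow_two]
  rw [hrpow, hone] at key
  have hnn : 0 ≤ ∫ σ in Ioo 0 L, ‖f σ‖ ^ 2 :=
    integral_nonneg fun x => sq_nonneg _
  calc ∫ σ in Ioc a b, ‖f σ‖ ≤ (∫ σ in Ioc a b, ‖f σ‖ ^ 2) ^ (1/2:ℝ) * (b - a) ^ (1/2:ℝ) := key
    _ ≤ (∫ σ in Ioo 0 L, ‖f σ‖ ^ 2) ^ (1/2:ℝ) * (b - a) ^ (1/2:ℝ) := by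
        have h2 : (0:ℝ) ≤ (b-a) ^ (1/2:ℝ) := Real.rpow_nonneg (sub_nonneg.2 hab) _
        exact mul_le_mul_of_nonneg_right (Real.rpow_le_rpow (integral_nonneg fun x => sq_nonneg _) hsubint (by norm_num)) h2
    _ = Real.sqrt ((b - a) * ∫ σ in Ioo 0 L, ‖f σ‖ ^ 2) := by
        rw [Real.sqrt_eq_rpow, Real.mul_rpow (sub_nonneg.2 hab) hnn, mul_comm]

/-- if `y_N` are C¹ curves with absolutely continuous derivatives, uniformly
bounded bending energy `∫₀^L |y_N''|² ≤ C`, speed exactly `λ_N` at the knots `t_i^N` and on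
the first and last subintervals, `λ_N → 1`, mesh size tending to `0`, and `y_N' → v`
pointwise, then `|v| ≡ 1` on `[0,L]`. -/
theorem stmt16 (L C : ℝ) (hL : 0 < L) (hC : 0 < C)
    (lam : ℕ → ℝ) (hlam_pos : ∀ N, 0 < lam N)
    (t : ℕ → ℕ → ℝ)
    (yN yN' yN'' : ℕ → ℝ → EuclideanSpace ℝ (Fin 3))
    (v : ℝ → EuclideanSpace ℝ (Fin 3))
    -- the partition `0 = t₀ ≤ t₁ < t₂ < … < t_N ≤ t_{N+1} = L`:
    (ht0 : ∀ N, t N 0 = 0) (htL : ∀ N, t N (N + 1) = L)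
    (hmono : ∀ N, ∀ i ≤ N, t N i ≤ t N (i + 1))
    (hstrict : ∀ N, ∀ i, 1 ≤ i → i + 1 ≤ N → t N i < t N (i + 1))
    -- `yN` is C¹ with absolutely continuous derivative and `yN'' ∈ L²`:
    (hderiv : ∀ N, ∀ s ∈ Icc 0 L, HasDerivWithinAt (yN N) (yN' N s) (Icc 0 L) s)
    (hAC : ∀ N, ∀ s ∈ Icc 0 L, yN' N s = yN' N 0 + ∫ σ in (0:ℝ)..s, yN'' N σ)
    (hL2 : ∀ N, MemLp (yN'' N) 2 (volume.restrict (Ioo 0 L)))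
    -- uniformly bounded bending energy:
    (henergy : ∀ N, ∫ s in Ioo 0 L, ‖yN'' N s‖ ^ 2 ≤ C)
    -- the speed is `λ_N` at the knots and on the first and last subintervals:
    (hknots : ∀ N, ∀ i, 1 ≤ i → i ≤ N → ‖yN' N (t N i)‖ = lam N)
    (hends : ∀ N, ∀ s, s ∈ Icc 0 (t N 1) ∪ Icc (t N N) L → ‖yN' N s‖ = lam N)
    -- `λ_N → 1`:
    (hlam : Tendsto lam atTop (𝓝 1))
    -- the mesh size tends to `0`:
    (hmesh : ∀ ε > (0:ℝ), ∃ N₀ : ℕ, ∀ N, N₀ ≤ N → ∀ i ≤ N, t N (i + 1) - t N i < ε)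
    -- pointwise convergence of the derivatives:
    (hconv : ∀ s ∈ Icc 0 L, Tendsto (fun N => yN' N s) atTop (𝓝 (v s))) :
    ∀ s ∈ Icc 0 L, ‖v s‖ = 1 := by
  intro s hs
  -- key estimate
  have est : ∀ ε > (0:ℝ), ∀ N, (∀ i ≤ N, t N (i + 1) - t N i < ε) →
      |‖yN' N s‖ - lam N| ≤ Real.sqrt (ε * C) := by
    intro ε hε N hmeshN
    have hsq : (0:ℝ) ≤ Real.sqrt (ε * C) := Real.sqrt_nonneg _
    -- monotonicity of the partition
    have tm : ∀ i j, i ≤ j → j ≤ N + 1 → t N i ≤ t N j := by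
      intro i j hij hjN
      induction j with
      | zero => obtain rfl := Nat.le_zero.mp hij; exact le_rfl
      | succ j ih =>
        rcases Nat.eq_or_lt_of_le hij with rfl | h
        · exact le_rfl
        · exact le_trans (ih (Nat.lt_succ_iff.mp h) (le_trans (Nat.le_succ j) hjN))
            (hmono N j (Nat.succ_le_succ_iff.mp hjN))
    haveI : DecidablePred (fun k => t N k ≤ s) := fun _ => Classical.dec _
    set i := Nat.findGreatest (fun k => t N k ≤ s) N with hi
    have hiN : i ≤ N := Nat.findGreatest_le N
    have his : t N i ≤ s :=
      Nat.findGreatest_spec (P := fun k => t N k ≤ s) (Nat.zero_le N) (by simpa [ht0] using hs.1)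
    rcases Nat.eq_or_lt_of_le hiN with hEq | hlt
    · -- i = N : s in last subinterval
      have : ‖yN' N s‖ = lam N := hends N s (Or.inr ⟨hEq ▸ his, hs.2⟩)
      simp [this, hsq]
    · -- i < N
      have hmax : ¬ (t N (i + 1) ≤ s) :=
        Nat.findGreatest_is_greatest (hi ▸ Nat.lt_succ_self i) (Nat.succ_le_of_lt hlt)
      push_neg at hmax
      rcases Nat.eq_zero_or_pos i with hi0 | hipos
      · -- s in first subinterval
        rw [hi0] at hmax
        have : ‖yN' N s‖ = lam N := hends N s (Or.inl ⟨hs.1, le_of_lt hmax⟩)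
        simp [this, hsq]
      · -- interior knot
        have hsL : s < L := lt_of_lt_of_le hmax (htL N ▸ tm (i+1) (N+1) (by omega) le_rfl)
        have hti0 : 0 ≤ t N i := ht0 N ▸ tm 0 i (Nat.zero_le i) (by omega)
        have htimem : t N i ∈ Icc (0:ℝ) L := ⟨hti0, le_trans his hs.2⟩
        have hknot : ‖yN' N (t N i)‖ = lam N := hknots N i hipos (le_of_lt hlt)
        -- difference of derivatives as an integral
        have hIntOn : IntegrableOn (yN'' N) (Ioo 0 L) volume :=
          (hL2 N).integrable one_le_two
        have hint1 : IntervalIntegrable (yN'' N) volume 0 s := by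
          rw [intervalIntegrable_iff_integrableOn_Ioc_of_le hs.1]
          exact hIntOn.mono_set (fun x hx => ⟨hx.1, lt_of_le_of_lt hx.2 hsL⟩)
        have hint2 : IntervalIntegrable (yN'' N) volume 0 (t N i) := by
          rw [intervalIntegrable_iff_integrableOn_Ioc_of_le hti0]
          exact hIntOn.mono_set (fun x hx =>
            ⟨hx.1, lt_of_le_of_lt (le_trans hx.2 his) hsL⟩)
        have hdiff : yN' N s - yN' N (t N i) = ∫ σ in (t N i)..s, yN'' N σ := by
          rw [hAC N s hs, hAC N (t N i) htimem]
          rw [add_sub_add_left_eq_sub]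
          exact intervalIntegral.integral_interval_sub_left hint1 hint2
        have hsub : Ioc (t N i) s ⊆ Ioo 0 L := fun x hx =>
          ⟨lt_of_le_of_lt hti0 hx.1, lt_of_le_of_lt hx.2 hsL⟩
        have hbound : ‖yN' N s - yN' N (t N i)‖ ≤ Real.sqrt (ε * C) := by
          rw [hdiff, intervalIntegral.integral_of_le his]
          calc ‖∫ σ in Ioc (t N i) s, yN'' N σ‖ ≤ ∫ σ in Ioc (t N i) s, ‖yN'' N σ‖ :=
                norm_integral_le_integral_norm _
            _ ≤ Real.sqrt ((s - t N i) * ∫ σ in Ioo 0 L, ‖yN'' N σ‖ ^ 2) :=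
                cs_aux (yN'' N) (hL2 N) hsub his
            _ ≤ Real.sqrt (ε * C) := by
                apply Real.sqrt_le_sqrt
                have h1 : s - t N i ≤ ε :=
                  le_of_lt (lt_of_le_of_lt (by linarith [hmax.le]) (hmeshN i (le_of_lt hlt)))
                exact mul_le_mul h1 (henergy N)
                  (integral_nonneg fun x => sq_nonneg _) (le_of_lt hε)
        calc |‖yN' N s‖ - lam N| = |‖yN' N s‖ - ‖yN' N (t N i)‖| := by rw [hknot]
          _ ≤ ‖yN' N s - yN' N (t N i)‖ := abs_norm_sub_norm_le _ _
          _ ≤ Real.sqrt (ε * C) := hbound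
  -- pass to the limit
  have hdiff0 : Tendsto (fun N => ‖yN' N s‖ - lam N) atTop (𝓝 0) := by
    rw [Metric.tendsto_atTop]
    intro δ hδ
    have hε : (0:ℝ) < δ ^ 2 / (4 * C) := by positivity
    obtain ⟨N₀, hN₀⟩ := hmesh _ hε
    refine ⟨N₀, fun N hN => ?_⟩
    have h1 := est _ hε N (hN₀ N hN)
    have h2 : Real.sqrt (δ ^ 2 / (4 * C) * C) = δ / 2 := by
      have h3 : δ ^ 2 / (4 * C) * C = (δ / 2) ^ 2 := by
        field_simp
        ring
      rw [h3, Real.sqrt_sq (by linarith)]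
    rw [Real.dist_eq, sub_zero]
    rw [h2] at h1
    linarith
  have h1 : Tendsto (fun N => ‖yN' N s‖) atTop (𝓝 1) := by
    have := hdiff0.add hlam
    simpa using this
  have h2 : Tendsto (fun N => ‖yN' N s‖) atTop (𝓝 ‖v s‖) := (hconv s hs).norm
  exact tendsto_nhds_unique h2 h1
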